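/- Ramification step (Claim 1.2): Let ε > 0 be real, and let t > 0, n* > 1, k(*) > 0 be natural numbers. There exist a constant c_1 ∈ ℕ (depending only on k(*) and n*) and a threshold (depending on 1/ε, t, k(*), n*) such that whenever m* exceeds the threshold and m ≥ 2^{(1+ε)·c_1·(m*)^{n*}}, the following holds. Suppose A ⊆ ℕ with |A| > m, and for each k < k(*) we have a function f_k with domain [A]^{n*} (arbitrary codomain), a function h_k : [A]^{n*} → ℕ, and a function g with domain [A]^{n*} whose range has at most t members. Then there exist A* ⊆ A with |A*| > m* and j* ∈ A with j* > sup(A*) such that for every k < k(*) and u, v ∈ [A*]^{n*-1}: (α) if u, v are neighbors then for all i ∈ A*_{>sup(u∪v)}: f_k(u ∪ {i}) = f_k(v ∪ {i}) iff f_k(u ∪ {j*}) = f_k(v ∪ {j*}); (β) for every i_0 < i_1 from A*_{>sup(u)}: f_k(u ∪ {i_0}) = f_k(u ∪ {i_1}) iff f_k(u ∪ {i_0}) = f_k(u ∪ {j*}); (γ) for all i ∈ A*_{>sup(u)}: g(u ∪ {i}) = g(u ∪ {j*}); (δ) either h_k(u) ≥ i for all i ∈ A*_{>sup(u)} ∪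 {j*}, or h_k(u) < i for all i ∈ A*_{>sup(u)} ∪ {j*}. -/

import Mathlib

/-- Finite subsets `u, v` of `ℕ` are neighbors: same size, they differ in exactly
one element, and the differing elements sit in the same position relative to the
common part. -/
def Neighbors (u v : Finset ℕ) : Prop :=
  u.card = v.card ∧ (u \ v).card = 1 ∧
    ∀ k ∈ u \ v, ∀ l ∈ v \ u, ∀ m ∈ u ∩ v, (k < m ↔ l < m)

/-- `above A u` is `A_{> sup u}`, the set of members of `A` greater than every
member of `u` (with the convention `A_{> sup ∅} = A`). -/
def above (A u : Finset ℕ) : Finset ℕ := A.filter fun j => ∀ x ∈ u, x < j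



open Finset

section Helpers
variable {Γ Γ' : Type*}

lemma card_image_const_le (B : Finset ℕ) (x : Γ) [DecidableEq Γ] :
    (B.image fun _ => x).card ≤ 1 := by
  classical
  refine Finset.card_le_one.2 ?_
  simp (config := {contextual := true}) [Finset.mem_image]

lemma card_image_pair_le (B : Finset ℕ) (f : ℕ → Γ) (g : ℕ → Γ')
    [DecidableEq Γ] [DecidableEq Γ'] :
    (B.image fun i => (f i, g i)).card ≤ (B.image f).card * (B.image g).card := by
  classical
  calc (B.image fun i => (f i, g i)).card
      ≤ ((B.image f) ×ˢ (B.image g)).card := by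
        refine Finset.card_le_card ?_
        intro p hp
        simp only [Finset.mem_image] at hp
        obtain ⟨i, hi, rfl⟩ := hp
        exact Finset.mem_product.2 ⟨Finset.mem_image_of_mem _ hi, Finset.mem_image_of_mem _ hi⟩
    _ = _ := Finset.card_product _ _

lemma card_image_listmap_le [DecidableEq Γ] (B : Finset ℕ) (c : Finset ℕ → ℕ → Γ)
    (l : List (Finset ℕ)) :
    (B.image fun i => l.map (fun s => c s i)).card
      ≤ (l.map fun s => (B.image (c s)).card).prod := by
  classical
  induction l with
  | nil =>
      simpa using card_image_const_le B ([] : List Γ)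
  | cons s l ih =>
      have h1 : (B.image fun i => (c s i :: l.map (fun s => c s i))).card
          = ((B.image fun i => (c s i, l.map fun s => c s i)).image
              fun p => p.1 :: p.2).card := by
        rw [Finset.image_image]
        rfl
      calc (B.image fun i => List.map (fun s => c s i) (s :: l)).card
          = ((B.image fun i => (c s i, l.map fun s => c s i)).image
              fun p => p.1 :: p.2).card := h1
        _ ≤ (B.image fun i => (c s i, l.map fun s => c s i)).card :=
            Finset.card_image_le
        _ ≤ (B.image (c s)).card * (B.image fun i => l.map fun s => c s i).card :=
            card_image_pair_le _ _ _
        _ ≤ (B.image (c s)).card * (l.map fun s => (B.image (c s)).card).prod :=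
            Nat.mul_le_mul_left _ ih
        _ = _ := by simp

lemma bool_ite_eq_iff (P Q : Prop) [Decidable P] [Decidable Q]
    (h : (if P then true else false) = (if Q then true else false)) : P ↔ Q := by
  by_cases hP : P <;> by_cases hQ : Q <;> simp [hP, hQ] at h ⊢

end Helpers


lemma card_image_trunc1_le [DecidableEq (ℕ → Bool)] (B : Finset ℕ) (K : ℕ) (b : ℕ → ℕ → Bool) :
    (B.image fun i => fun k => if k < K then b i k else false).card ≤ 2 ^ K := by
  classical
  set T : Finset (ℕ → Bool) :=
    (Finset.univ : Finset (Fin K → Bool)).image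
      (fun v => fun n => if h : n < K then v ⟨n, h⟩ else false) with hT
  have hsub : (B.image fun i => fun k => if k < K then b i k else false) ⊆ T := by
    intro F hF
    simp only [Finset.mem_image] at hF
    obtain ⟨i, _, rfl⟩ := hF
    rw [hT]
    refine Finset.mem_image.2 ⟨fun k => b i k, Finset.mem_univ _, ?_⟩
    funext n
    by_cases h : n < K <;> simp [h]
  calc _ ≤ T.card := Finset.card_le_card hsub
    _ ≤ (Finset.univ : Finset (Fin K → Bool)).card := Finset.card_image_le
    _ = 2 ^ K := by simp [Finset.card_univ]

lemma card_image_trunc3_le [DecidableEq (ℕ → ℕ → ℕ → Bool)] (B : Finset ℕ) (K P Q : ℕ)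
    (b : ℕ → ℕ → ℕ → ℕ → Bool) :
    (B.image fun i => fun k p q =>
        if k < K then if p < P then if q < Q then b i k p q else false
          else false else false).card ≤ 2 ^ (K * (P * Q)) := by
  classical
  set T : Finset (ℕ → ℕ → ℕ → Bool) :=
    (Finset.univ : Finset (Fin K → Fin P → Fin Q → Bool)).image
      (fun v => fun k p q =>
        if hk : k < K then if hp : p < P then if hq : q < Q then
          v ⟨k, hk⟩ ⟨p, hp⟩ ⟨q, hq⟩ else false else false else false) with hT
  have hsub : (B.image fun i => fun k p q =>
        if k < K then if p < P then if q < Q then b i k p q else false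
          else false else false) ⊆ T := by
    intro F hF
    simp only [Finset.mem_image] at hF
    obtain ⟨i, _, rfl⟩ := hF
    rw [hT]
    refine Finset.mem_image.2
      ⟨fun k p q => b i k p q, Finset.mem_univ _, ?_⟩
    funext k p q
    by_cases hk : k < K <;> by_cases hp : p < P <;> by_cases hq : q < Q <;>
      simp [hk, hp, hq]
  calc _ ≤ T.card := Finset.card_le_card hsub
    _ ≤ (Finset.univ : Finset (Fin K → Fin P → Fin Q → Bool)).card :=
        Finset.card_image_le
    _ = 2 ^ (K * (P * Q)) := by
        simp only [Finset.card_univ, Fintype.card_fun, Fintype.card_bool, Fintype.card_fin]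
        rw [← pow_mul, ← pow_mul]
        congr 1
        ring

lemma card_image_opt_le {β : Type*} [DecidableEq (Option β)] (B : Finset ℕ) (R : Finset β)
    (F : ℕ → Option β) (hF : ∀ i ∈ B, F i = none ∨ ∃ r ∈ R, F i = some r) :
    (B.image F).card ≤ R.card + 1 := by
  classical
  have hsub : B.image F ⊆ insert none (R.image some) := by
    intro o ho
    simp only [Finset.mem_image] at ho
    obtain ⟨i, hi, rfl⟩ := ho
    rcases hF i hi with h | ⟨r, hr, h⟩
    · simp [h]
    · exact Finset.mem_insert.2 (Or.inr (by rw [h]; exact Finset.mem_image_of_mem _ hr))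
  calc _ ≤ (insert none (R.image some)).card := Finset.card_le_card hsub
    _ ≤ (R.image some).card + 1 := Finset.card_insert_le _ _
    _ ≤ R.card + 1 := by have := Finset.card_image_le (s := R) (f := some); omega


def PP (cost : ℕ → ℕ) (nstar j : ℕ) : ℕ :=
  ∏ d ∈ Finset.Icc 1 nstar, cost d ^ (j.choose (d - 1))

def Need (cost : ℕ → ℕ) (nstar : ℕ) : ℕ → ℕ → ℕ
  | 0, _ => 0
  | n + 1, j => 1 + PP cost nstar j * Need cost nstar n (j + 1)

lemma Need_succ (cost : ℕ → ℕ) (nstar n j : ℕ) :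
    Need cost nstar (n + 1) j = 1 + PP cost nstar j * Need cost nstar n (j + 1) := rfl

lemma PP_pos (cost : ℕ → ℕ) (hcost : ∀ d, 0 < cost d) (nstar j : ℕ) :
    0 < PP cost nstar j :=
  Finset.prod_pos fun d _ => pow_pos (hcost d) _

lemma PP_mono (cost : ℕ → ℕ) (hcost : ∀ d, 0 < cost d) (nstar : ℕ) {j j' : ℕ}
    (h : j ≤ j') : PP cost nstar j ≤ PP cost nstar j' :=
  Finset.prod_le_prod' fun d _ =>
    Nat.pow_le_pow_right (hcost d) (Nat.choose_le_choose _ h)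

lemma Need_le (cost : ℕ → ℕ) (hcost : ∀ d, 0 < cost d) (nstar : ℕ) :
    ∀ n j, Need cost nstar n j ≤ (2 * PP cost nstar (j + n)) ^ n := by
  intro n
  induction n with
  | zero => intro j; simp [Need]
  | succ n IH =>
      intro j
      rw [Need_succ]
      have h1 : Need cost nstar n (j + 1) ≤ (2 * PP cost nstar (j + 1 + n)) ^ n := IH (j + 1)
      have hje : j + 1 + n = j + (n + 1) := by omega
      rw [hje] at h1
      have h2 : PP cost nstar j ≤ PP cost nstar (j + (n + 1)) :=
        PP_mono cost hcost nstar (by omega)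
      have hPPpos : 0 < PP cost nstar (j + (n + 1)) := PP_pos cost hcost nstar _
      set P := PP cost nstar (j + (n + 1))
      have h3 : 1 + PP cost nstar j * Need cost nstar n (j + 1) ≤ 1 + P * (2 * P) ^ n :=
        Nat.add_le_add_left (Nat.mul_le_mul h2 h1) 1
      refine h3.trans ?_
      calc 1 + P * (2 * P) ^ n ≤ P * (2 * P) ^ n + P * (2 * P) ^ n := by
            have : 1 ≤ P * (2 * P) ^ n := Nat.one_le_iff_ne_zero.2 (by positivity)
            omega
        _ = 2 * P * (2 * P) ^ n := by ring
        _ = (2 * P) ^ (n + 1) := by rw [pow_succ]; ring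

lemma prod_newsets_le (nstar : ℕ) (cost : ℕ → ℕ) (hcost : ∀ d, 0 < cost d)
    (D : Finset ℕ) (a : ℕ) (ha : a ∉ D) :
    ∏ s ∈ ((insert a D).powerset.filter fun s => a ∈ s ∧ s.card ≤ nstar), cost s.card
      ≤ PP cost nstar D.card := by
  classical
  set S := ((insert a D).powerset.filter fun s => a ∈ s ∧ s.card ≤ nstar) with hS
  have hmaps : ∀ s ∈ S, s.card ∈ Finset.Icc 1 nstar := by
    intro s hs
    simp only [hS, Finset.mem_filter, Finset.mem_powerset] at hs
    exact Finset.mem_Icc.2 ⟨Finset.card_pos.2 ⟨a, hs.2.1⟩, hs.2.2⟩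
  rw [show (∏ s ∈ S, cost s.card) =
      ∏ d ∈ Finset.Icc 1 nstar, ∏ s ∈ S.filter (fun s => s.card = d), cost s.card from
    (Finset.prod_fiberwise_of_maps_to hmaps (fun s => cost s.card)).symm]
  refine Finset.prod_le_prod' ?_
  intro d _
  have hinner : ∏ s ∈ S.filter (fun s => s.card = d), cost s.card
      = cost d ^ (S.filter fun s => s.card = d).card := by
    rw [Finset.prod_congr rfl (fun s hs => by rw [(Finset.mem_filter.1 hs).2]),
      Finset.prod_const]
  rw [hinner]
  refine Nat.pow_le_pow_right (hcost d) ?_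
  have hle : (S.filter fun s => s.card = d).card ≤ (D.powersetCard (d - 1)).card := by
    refine Finset.card_le_card_of_injOn (fun s => s.erase a) ?_ ?_
    · intro s hs
      simp only [Finset.mem_coe, Finset.mem_filter, hS, Finset.mem_powerset] at hs
      refine Finset.mem_powersetCard.2 ⟨?_, ?_⟩
      · intro z hz
        have hz1 := Finset.mem_of_mem_erase hz
        have hz2 := Finset.ne_of_mem_erase hz
        rcases Finset.mem_insert.1 (hs.1.1 hz1) with h | h
        · exact absurd h hz2
        · exact h
      · rw [Finset.card_erase_of_mem hs.1.2.1, hs.2]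
    · intro s₁ h₁ s₂ h₂ he
      simp only [Finset.coe_filter, Set.mem_setOf_eq, hS, Finset.mem_filter,
        Finset.mem_powerset] at h₁ h₂
      have he' : s₁.erase a = s₂.erase a := he
      rw [← Finset.insert_erase h₁.1.2.1, he', Finset.insert_erase h₂.1.2.1]
  rwa [Finset.card_powersetCard] at hle

lemma greedy {Γ : Type*} [DecidableEq Γ] (nstar : ℕ) (cost : ℕ → ℕ)
    (hcost : ∀ d, 0 < cost d) (c : Finset ℕ → ℕ → Γ) (A : Finset ℕ)
    (hb : ∀ s, s ⊆ A → s.Nonempty → s.card ≤ nstar →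
      (A.image (c s)).card ≤ cost s.card) :
    ∀ n (D B : Finset ℕ), D ⊆ A → B ⊆ A → Need cost nstar n D.card ≤ B.card →
      (∀ x ∈ D, ∀ y ∈ B, x < y) →
      (∀ s, s ⊆ D → s.Nonempty → s.card ≤ nstar → ∀ i ∈ B, ∀ i' ∈ B, c s i = c s i') →
      ∃ E, E ⊆ B ∧ E.card = n ∧
        ∀ s, s ⊆ D ∪ E → s.Nonempty → s.card ≤ nstar →
          ∀ i ∈ E, ∀ i' ∈ E, (∀ x ∈ s, x < i) → (∀ x ∈ s, x < i') → c s i = c s i' := by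
  intro n
  induction n with
  | zero =>
      intro D B _ _ _ _ _
      exact ⟨∅, Finset.empty_subset _, Finset.card_empty, by simp⟩
  | succ n IH =>
      intro D B hDA hBA hNeed horder hinv
      rw [Need_succ] at hNeed
      have hne : B.Nonempty := Finset.card_pos.1 (by omega)
      set a := B.min' hne with ha
      have haB : a ∈ B := B.min'_mem hne
      have haD : a ∉ D := fun h => lt_irrefl a (horder a h a haB)
      set S := ((insert a D).powerset.filter fun s => a ∈ s ∧ s.card ≤ nstar) with hS
      set F : ℕ → List Γ := fun i => S.toList.map (fun s => c s i) with hF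
      set B₁ := B.erase a with hB₁def
      have hB₁card : PP cost nstar D.card * Need cost nstar n (D.card + 1) ≤ B₁.card := by
        rw [hB₁def, Finset.card_erase_of_mem haB]; omega
      have himg : (B₁.image F).card ≤ PP cost nstar D.card := by
        calc (B₁.image F).card
            ≤ (S.toList.map fun s => (B₁.image (c s)).card).prod :=
              card_image_listmap_le _ _ _
          _ = ∏ s ∈ S, (B₁.image (c s)).card := Finset.prod_map_toList _ _
          _ ≤ ∏ s ∈ S, cost s.card := by
              refine Finset.prod_le_prod' ?_
              intro s hs
              simp only [hS, Finset.mem_filter, Finset.mem_powerset] at hs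
              have hsA : s ⊆ A :=
                hs.1.trans (Finset.insert_subset (hBA haB) hDA)
              calc (B₁.image (c s)).card ≤ (A.image (c s)).card :=
                    Finset.card_le_card (Finset.image_subset_image
                      (((Finset.erase_subset _ _).trans hBA)))
                _ ≤ cost s.card := hb s hsA ⟨a, hs.2.1⟩ hs.2.2
          _ ≤ PP cost nstar D.card := prod_newsets_le nstar cost hcost D a haD
      obtain ⟨B', hB'sub, hB'card, hB'hom⟩ :
          ∃ B', B' ⊆ B₁ ∧ Need cost nstar n (D.card + 1) ≤ B'.card ∧
            ∀ i ∈ B', ∀ i' ∈ B', F i = F i' := by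
        by_cases hB₁ne : B₁.Nonempty
        · have htne : (B₁.image F).Nonempty := hB₁ne.image F
          obtain ⟨y, _, hy⟩ := Finset.exists_le_card_fiber_of_mul_le_card_of_maps_to
            (fun i hi => Finset.mem_image_of_mem F hi) htne
            (le_trans (Nat.mul_le_mul_right _ himg) hB₁card)
          exact ⟨B₁.filter (fun i => F i = y), Finset.filter_subset _ _, hy,
            fun i hi i' hi' => by
              rw [(Finset.mem_filter.1 hi).2, (Finset.mem_filter.1 hi').2]⟩
        · have hB₁0 : B₁.card = 0 := by
            rw [Finset.not_nonempty_iff_eq_empty.1 hB₁ne]; rfl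
          have h0 : PP cost nstar D.card * Need cost nstar n (D.card + 1) = 0 := by omega
          have hPP := PP_pos cost hcost nstar D.card
          have hN0 : Need cost nstar n (D.card + 1) = 0 := by
            rcases Nat.mul_eq_zero.1 h0 with h | h
            · omega
            · exact h
          exact ⟨∅, Finset.empty_subset _, by omega, by simp⟩
      set D' := insert a D with hD'
      have hD'card : D'.card = D.card + 1 := Finset.card_insert_of_notMem haD
      have hB'B : B' ⊆ B := hB'sub.trans (Finset.erase_subset _ _)
      have horder' : ∀ x ∈ D', ∀ y ∈ B', x < y := by
        intro x hx y hy
        rcases Finset.mem_insert.1 hx with h | hx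
        · have h1 : a ≤ y := Finset.min'_le _ _ (hB'B hy)
          have h2 : y ≠ a := Finset.ne_of_mem_erase (hB'sub hy)
          omega
        · exact horder x hx y (hB'B hy)
      have hinv' : ∀ s, s ⊆ D' → s.Nonempty → s.card ≤ nstar →
          ∀ i ∈ B', ∀ i' ∈ B', c s i = c s i' := by
        intro s hsD' hsne hscard i hi i' hi'
        by_cases hasin : a ∈ s
        · have hsS : s ∈ S := by
            rw [hS]
            exact Finset.mem_filter.2 ⟨Finset.mem_powerset.2 hsD', hasin, hscard⟩
          have hFF := hB'hom i hi i' hi'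
          rw [hF] at hFF
          exact List.map_eq_map_iff.1 hFF s (Finset.mem_toList.2 hsS)
        · have hsD : s ⊆ D := fun z hz => by
            rcases Finset.mem_insert.1 (hsD' hz) with h | h
            · exact absurd (h ▸ hz) hasin
            · exact h
          exact hinv s hsD hsne hscard i (hB'B hi) i' (hB'B hi')
      have hD'A : D' ⊆ A := Finset.insert_subset (hBA haB) hDA
      obtain ⟨E', hE'sub, hE'card, hE'hom⟩ :=
        IH D' B' hD'A (hB'B.trans hBA) (by rw [hD'card]; exact hB'card) horder' hinv'
      have hE'B : ∀ z ∈ E', z ∈ B := fun z hz => hB'B (hE'sub hz)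
      have hagt : ∀ z ∈ E', a < z := fun z hz => by
        have h1 : a ≤ z := Finset.min'_le _ _ (hE'B z hz)
        have h2 : z ≠ a := Finset.ne_of_mem_erase (hB'sub (hE'sub hz))
        omega
      have haE' : a ∉ E' := fun h => lt_irrefl a (hagt a h)
      refine ⟨insert a E', Finset.insert_subset haB (fun z hz => hE'B z hz), ?_, ?_⟩
      · rw [Finset.card_insert_of_notMem haE', hE'card]
      · intro s hsDE hsne hscard i hi i' hi' hilt hilt'
        have hsDE' : s ⊆ D' ∪ E' := by
          intro z hz
          rcases Finset.mem_union.1 (hsDE hz) with h | h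
          · exact Finset.mem_union.2 (Or.inl (Finset.mem_insert_of_mem h))
          · rcases Finset.mem_insert.1 h with rfl | h
            · exact Finset.mem_union.2 (Or.inl (Finset.mem_insert_self _ _))
            · exact Finset.mem_union.2 (Or.inr h)
        have hcase : ∀ i'' ∈ E', (∀ x ∈ s, x < a) → c s a = c s i'' := by
          intro i'' hi'' hslt
          have hsD : s ⊆ D := by
            intro z hz
            rcases Finset.mem_union.1 (hsDE' hz) with h | h
            · rcases Finset.mem_insert.1 h with h1 | h1
              · exact absurd (h1 ▸ hslt z hz) (lt_irrefl a)
              · exact h1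
            · exact absurd (hslt z hz) (by have := hagt z h; omega)
          exact hinv s hsD hsne hscard a haB i'' (hE'B i'' hi'')
        rcases Finset.mem_insert.1 hi with rfl | hiE'
        · rcases Finset.mem_insert.1 hi' with h' | hi'E'
          · rw [h']
          · exact hcase i' hi'E' hilt
        · rcases Finset.mem_insert.1 hi' with rfl | hi'E'
          · exact (hcase i hiE' hilt').symm
          · exact hE'hom s hsDE' hsne hscard i hiE' i' hi'E' hilt hilt'


section Color
variable {α β : Type}

lemma card_image_fun_le_one {Γ : Type*} [DecidableEq Γ] (B : Finset ℕ) (F : ℕ → Γ)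
    (hconst : ∀ i ∈ B, ∀ j ∈ B, F i = F j) : (B.image F).card ≤ 1 := by
  refine Finset.card_le_one.2 ?_
  intro x hx y hy
  simp only [Finset.mem_image] at hx hy
  obtain ⟨i, hi, rfl⟩ := hx
  obtain ⟨j, hj, rfl⟩ := hy
  exact hconst i hi j hj

open Classical in
noncomputable def colorFn (nstar kstar : ℕ) (A : Finset ℕ) (f : ℕ → Finset ℕ → α)
    (h : ℕ → Finset ℕ → ℕ) (g : Finset ℕ → β) (s : Finset ℕ) (i : ℕ) :
    Option β × (ℕ → Bool) × (ℕ → Bool) × (ℕ → ℕ → ℕ → Bool) :=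
  ((if i ∉ s ∧ s.card = nstar - 1 ∧ s ⊆ A then some (g (insert i s)) else none),
   (fun k => if k < kstar then (if s.card = nstar - 1 then
      (if i ≤ h k s then true else false) else false) else false),
   (fun k => if k < kstar then (if s.card = nstar then
      (if f k s = f k (insert i (s.erase ((s.max).getD 0))) then true else false)
      else false) else false),
   (fun k p q => if k < kstar then (if p < nstar then (if q < nstar then
      (if s.card = nstar ∧
          f k (insert i (s.erase ((s.sort (· ≤ ·)).getD p 0)))
            = f k (insert i (s.erase ((s.sort (· ≤ ·)).getD q 0))) then true else false)
      else false) else false) else false))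

def costF (nstar kstar t : ℕ) (d : ℕ) : ℕ :=
  if d = nstar - 1 then (t + 1) * 2 ^ kstar
  else if d = nstar then 2 ^ kstar * 2 ^ (kstar * (nstar * nstar))
  else 1

lemma costF_pos (nstar kstar t d : ℕ) : 0 < costF nstar kstar t d := by
  unfold costF
  split <;> [positivity; skip]
  split <;> positivity

set_option maxHeartbeats 2000000 in
lemma colorFn_bound (nstar kstar t : ℕ) (hn : 1 < nstar) (A : Finset ℕ)
    (f : ℕ → Finset ℕ → α) (h : ℕ → Finset ℕ → ℕ) (g : Finset ℕ → β)
    [DecidableEq β] [DecidableEq (ℕ → Bool)] [DecidableEq (ℕ → ℕ → ℕ → Bool)]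
    (R : Finset β) (hR : R.card ≤ t) (hgR : ∀ u ∈ A.powersetCard nstar, g u ∈ R) :
    ∀ s, s ⊆ A → s.Nonempty → s.card ≤ nstar →
      (A.image (colorFn nstar kstar A f h g s)).card ≤ costF nstar kstar t s.card := by
  classical
  intro s hsA _ _
  set γc : ℕ → Option β := fun i =>
    if i ∉ s ∧ s.card = nstar - 1 ∧ s ⊆ A then some (g (insert i s)) else none with hγc
  set δc : ℕ → ℕ → Bool := fun i k => if k < kstar then (if s.card = nstar - 1 then
      (if i ≤ h k s then true else false) else false) else false with hδc
  set βc : ℕ → ℕ → Bool := fun i k => if k < kstar then (if s.card = nstar then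
      (if f k s = f k (insert i (s.erase ((s.max).getD 0))) then true else false)
      else false) else false with hβc
  set αc : ℕ → ℕ → ℕ → ℕ → Bool := fun i k p q =>
    if k < kstar then (if p < nstar then (if q < nstar then
      (if s.card = nstar ∧
          f k (insert i (s.erase ((s.sort (· ≤ ·)).getD p 0)))
            = f k (insert i (s.erase ((s.sort (· ≤ ·)).getD q 0))) then true else false)
      else false) else false) else false with hαc
  have hco : colorFn nstar kstar A f h g s = fun i => (γc i, δc i, βc i, αc i) := rfl
  have hsplit : (A.image (colorFn nstar kstar A f h g s)).card ≤
      (A.image γc).card * ((A.image fun i => δc i).card *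
        ((A.image fun i => βc i).card * (A.image fun i => αc i).card)) := by
    rw [hco]
    calc (A.image fun i => (γc i, δc i, βc i, αc i)).card
        ≤ (A.image γc).card *
            (A.image fun i => (δc i, βc i, αc i)).card := card_image_pair_le _ _ _
      _ ≤ (A.image γc).card * ((A.image fun i => δc i).card *
            (A.image fun i => (βc i, αc i)).card) :=
          Nat.mul_le_mul_left _ (card_image_pair_le _ _ _)
      _ ≤ _ := Nat.mul_le_mul_left _ (Nat.mul_le_mul_left _ (card_image_pair_le _ _ _))
  by_cases hc1 : s.card = nstar - 1
  · have hcn : s.card ≠ nstar := by omega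
    have hγ : (A.image γc).card ≤ t + 1 := by
      have := card_image_opt_le A R γc (fun i hi => by
        rw [hγc]
        by_cases hg : i ∉ s ∧ s.card = nstar - 1 ∧ s ⊆ A
        · refine Or.inr ⟨g (insert i s), ?_, if_pos hg⟩
          refine hgR _ (Finset.mem_powersetCard.2 ⟨Finset.insert_subset hi hsA, ?_⟩)
          rw [Finset.card_insert_of_notMem hg.1, hc1]
          omega
        · exact Or.inl (if_neg hg))
      omega
    have hδ : (A.image fun i => δc i).card ≤ 2 ^ kstar := card_image_trunc1_le A kstar _
    have hβ : (A.image fun i => βc i).card ≤ 1 := by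
      refine card_image_fun_le_one _ _ ?_
      intro i _ j _
      funext k
      simp only [hβc, hcn, if_false]
    have hα : (A.image fun i => αc i).card ≤ 1 := by
      refine card_image_fun_le_one _ _ ?_
      intro i _ j _
      funext k p q
      simp only [hαc, hcn, false_and, if_false]
    calc (A.image (colorFn nstar kstar A f h g s)).card
        ≤ (t + 1) * (2 ^ kstar * (1 * 1)) :=
          hsplit.trans (Nat.mul_le_mul hγ (Nat.mul_le_mul hδ (Nat.mul_le_mul hβ hα)))
      _ = (t + 1) * 2 ^ kstar := by ring
      _ = costF nstar kstar t s.card := by rw [costF, if_pos hc1]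
  · by_cases hc2 : s.card = nstar
    · have hγ : (A.image γc).card ≤ 1 := by
        refine card_image_fun_le_one _ _ ?_
        intro i _ j _
        simp only [hγc, hc1, false_and, and_false, if_false]
      have hδ : (A.image fun i => δc i).card ≤ 1 := by
        refine card_image_fun_le_one _ _ ?_
        intro i _ j _
        funext k
        simp only [hδc, hc1, if_false]
      have hβ : (A.image fun i => βc i).card ≤ 2 ^ kstar := card_image_trunc1_le A kstar _
      have hα : (A.image fun i => αc i).card ≤ 2 ^ (kstar * (nstar * nstar)) :=
        card_image_trunc3_le A kstar nstar nstar _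
      calc (A.image (colorFn nstar kstar A f h g s)).card
          ≤ 1 * (1 * (2 ^ kstar * 2 ^ (kstar * (nstar * nstar)))) :=
            hsplit.trans (Nat.mul_le_mul hγ (Nat.mul_le_mul hδ (Nat.mul_le_mul hβ hα)))
        _ = 2 ^ kstar * 2 ^ (kstar * (nstar * nstar)) := by ring
        _ = costF nstar kstar t s.card := by rw [costF, if_neg hc1, if_pos hc2]
    · have hγ : (A.image γc).card ≤ 1 := by
        refine card_image_fun_le_one _ _ ?_
        intro i _ j _
        simp only [hγc, hc1, false_and, and_false, if_false]
      have hδ : (A.image fun i => δc i).card ≤ 1 := by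
        refine card_image_fun_le_one _ _ ?_
        intro i _ j _
        funext k
        simp only [hδc, hc1, if_false]
      have hβ : (A.image fun i => βc i).card ≤ 1 := by
        refine card_image_fun_le_one _ _ ?_
        intro i _ j _
        funext k
        simp only [hβc, hc2, if_false]
      have hα : (A.image fun i => αc i).card ≤ 1 := by
        refine card_image_fun_le_one _ _ ?_
        intro i _ j _
        funext k p q
        simp only [hαc, hc2, false_and, if_false]
      calc (A.image (colorFn nstar kstar A f h g s)).card
          ≤ 1 * (1 * (1 * 1)) :=
            hsplit.trans (Nat.mul_le_mul hγ (Nat.mul_le_mul hδ (Nat.mul_le_mul hβ hα)))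
        _ = costF nstar kstar t s.card := by rw [costF, if_neg hc1, if_neg hc2]

end Color



lemma max_insert_top (u : Finset ℕ) (i₀ : ℕ) (hlt : ∀ x ∈ u, x < i₀) :
    (insert i₀ u).max = (i₀ : WithBot ℕ) := by
  rw [Finset.max_insert]
  refine sup_eq_left.2 (Finset.max_le_iff.2 ?_)
  exact fun b hb => WithBot.coe_le_coe.2 (le_of_lt (hlt b hb))

lemma sort_getD_of_mem (s : Finset ℕ) (x : ℕ) (hx : x ∈ s) :
    ∃ p < s.card, (s.sort (· ≤ ·)).getD p 0 = x := by
  have hxl : x ∈ s.sort (· ≤ ·) := (Finset.mem_sort _).2 hx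
  obtain ⟨p, hplen, hpx⟩ := List.getElem_of_mem hxl
  have hlen : (s.sort (· ≤ ·)).length = s.card := Finset.length_sort _
  exact ⟨p, by omega, by rw [List.getD_eq_getElem _ _ hplen, hpx]⟩



section Extract2
variable {α β : Type} {nstar kstar : ℕ} {A : Finset ℕ} {f : ℕ → Finset ℕ → α}
  {h : ℕ → Finset ℕ → ℕ} {g : Finset ℕ → β} {s : Finset ℕ} {i i' k p q : ℕ}

lemma colorFn_gamma (hcc : colorFn nstar kstar A f h g s i = colorFn nstar kstar A f h g s i')
    (hi : i ∉ s) (hi' : i' ∉ s) (hcard : s.card = nstar - 1) (hsA : s ⊆ A) :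
    g (insert i s) = g (insert i' s) := by
  have h1 := congrArg Prod.fst hcc
  simp only [colorFn] at h1
  split_ifs at h1 <;> first | exact Option.some.inj h1 | tauto

lemma colorFn_delta (hcc : colorFn nstar kstar A f h g s i = colorFn nstar kstar A f h g s i')
    (hk : k < kstar) (hcard : s.card = nstar - 1) :
    (i ≤ h k s ↔ i' ≤ h k s) := by
  have h2 := congrArg (fun z => z.2.1 k) hcc
  simp only [colorFn] at h2
  split_ifs at h2 <;> tauto

lemma colorFn_beta (hcc : colorFn nstar kstar A f h g s i = colorFn nstar kstar A f h g s i')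
    (hk : k < kstar) (hcard : s.card = nstar) :
    (f k s = f k (insert i (s.erase ((s.max).getD 0))) ↔
     f k s = f k (insert i' (s.erase ((s.max).getD 0)))) := by
  have h3 := congrArg (fun z => z.2.2.1 k) hcc
  simp only [colorFn] at h3
  split_ifs at h3 <;> tauto

lemma colorFn_alpha (hcc : colorFn nstar kstar A f h g s i = colorFn nstar kstar A f h g s i')
    (hk : k < kstar) (hcard : s.card = nstar) (hp : p < nstar) (hq : q < nstar) :
    (f k (insert i (s.erase ((s.sort (· ≤ ·)).getD p 0)))
        = f k (insert i (s.erase ((s.sort (· ≤ ·)).getD q 0))) ↔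
     f k (insert i' (s.erase ((s.sort (· ≤ ·)).getD p 0)))
        = f k (insert i' (s.erase ((s.sort (· ≤ ·)).getD q 0)))) := by
  have h4 := congrArg (fun z => z.2.2.2 k p q) hcc
  simp only [colorFn] at h4
  split_ifs at h4 <;> tauto

end Extract2


set_option maxHeartbeats 1600000 in
/-- Ramification step (Claim 1.2). -/
theorem ramification_step :
    ∀ nstar kstar : ℕ, 1 < nstar → 0 < kstar →
    ∃ c₁ : ℕ, ∀ t : ℕ, 0 < t → ∀ ε : ℝ, 0 < ε →
    ∃ mthr : ℕ, ∀ mstar : ℕ, mthr ≤ mstar → ∀ m : ℕ,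
      (2 : ℝ) ^ ((1 + ε) * (c₁ : ℝ) * (mstar : ℝ) ^ nstar) ≤ (m : ℝ) →
      ∀ (α β : Type) (A : Finset ℕ), m < A.card →
      ∀ (f : ℕ → Finset ℕ → α) (h : ℕ → Finset ℕ → ℕ) (g : Finset ℕ → β),
        (∃ R : Finset β, R.card ≤ t ∧ ∀ u ∈ A.powersetCard nstar, g u ∈ R) →
        ∃ Astar : Finset ℕ, Astar ⊆ A ∧ mstar < Astar.card ∧
        ∃ jstar ∈ A, (∀ x ∈ Astar, x < jstar) ∧
          ∀ k < kstar, ∀ u ∈ Astar.powersetCard (nstar - 1),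
            ∀ v ∈ Astar.powersetCard (nstar - 1),
            -- (α)
            (Neighbors u v →
              ∀ i ∈ above Astar (u ∪ v),
                (f k (insert i u) = f k (insert i v) ↔
                 f k (insert jstar u) = f k (insert jstar v))) ∧
            -- (β)
            (∀ i₀ ∈ above Astar u, ∀ i₁ ∈ above Astar u, i₀ < i₁ →
              (f k (insert i₀ u) = f k (insert i₁ u) ↔
               f k (insert i₀ u) = f k (insert jstar u))) ∧
            -- (γ)
            (∀ i ∈ above Astar u, g (insert i u) = g (insert jstar u)) ∧
            -- (δ)
            ((∀ i ∈ insert jstar (above Astar u), i ≤ h k u) ∨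
             (∀ i ∈ insert jstar (above Astar u), h k u < i)) := by
  intro nstar kstar hn hk
  refine ⟨kstar * (nstar * nstar + 1) * 2 ^ nstar, ?_⟩
  intro t ht ε hε
  set L := Nat.clog 2 (t + 1) with hL
  refine ⟨2 + Nat.ceil ((((1 + L + kstar) * 2 ^ nstar : ℕ) : ℝ) / ε), ?_⟩
  intro mstar hmthr m hm α β A hA f h g hg
  obtain ⟨R, hR, hgR⟩ := hg
  classical
  letI : DecidableEq β := Classical.decEq β
  letI : DecidableEq (ℕ → Bool) := Classical.decEq _
  letI : DecidableEq (ℕ → ℕ → ℕ → Bool) := Classical.decEq _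
  set N := mstar + 2 with hN
  set cost := costF nstar kstar t with hcostdef
  have hcostpos : ∀ d, 0 < cost d := fun d => costF_pos _ _ _ _
  -- ℕ arithmetic: Need ≤ 2 ^ X
  set Y := (L + kstar) * N ^ (nstar - 2)
      + (kstar + kstar * (nstar * nstar)) * N ^ (nstar - 1) with hY
  set X := N + ((L + kstar) * N ^ (nstar - 1)
      + (kstar + kstar * (nstar * nstar)) * N ^ nstar) with hX
  have hprodeq : PP cost nstar N = cost (nstar - 1) ^ (N.choose (nstar - 1 - 1))
      * cost nstar ^ (N.choose (nstar - 1)) := by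
    have hsub : ({nstar - 1, nstar} : Finset ℕ) ⊆ Finset.Icc 1 nstar := by
      intro d hd
      rw [Finset.mem_insert, Finset.mem_singleton] at hd
      rcases hd with rfl | rfl <;> (rw [Finset.mem_Icc]; omega)
    have htriv : ∀ d ∈ Finset.Icc 1 nstar, d ∉ ({nstar - 1, nstar} : Finset ℕ) →
        cost d ^ (N.choose (d - 1)) = 1 := by
      intro d _ hnd
      rw [Finset.mem_insert, Finset.mem_singleton] at hnd
      push_neg at hnd
      rw [hcostdef, costF, if_neg hnd.1, if_neg hnd.2, one_pow]
    rw [PP, ← Finset.prod_subset hsub htriv,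
      Finset.prod_pair (by omega : nstar - 1 ≠ nstar)]
  have hcv1 : cost (nstar - 1) = (t + 1) * 2 ^ kstar := by
    rw [hcostdef, costF, if_pos rfl]
  have hcv2 : cost nstar = 2 ^ (kstar + kstar * (nstar * nstar)) := by
    rw [hcostdef, costF, if_neg (by omega), if_pos rfl, pow_add]
  have ht2 : t + 1 ≤ 2 ^ L := Nat.le_pow_clog (by norm_num) _
  have hcb1 : cost (nstar - 1) ≤ 2 ^ (L + kstar) := by
    rw [hcv1, pow_add]
    exact Nat.mul_le_mul_right _ ht2
  have hch1 : N.choose (nstar - 1 - 1) ≤ N ^ (nstar - 2) := by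
    have h1 := Nat.choose_le_pow N (nstar - 1 - 1)
    have h2 : nstar - 1 - 1 = nstar - 2 := by omega
    rwa [h2] at h1
  have hch2 : N.choose (nstar - 1) ≤ N ^ (nstar - 1) := Nat.choose_le_pow N _
  have hPPle : PP cost nstar N ≤ 2 ^ Y := by
    rw [hprodeq, hY, pow_add]
    refine Nat.mul_le_mul ?_ ?_
    · calc cost (nstar - 1) ^ (N.choose (nstar - 1 - 1))
          ≤ (2 ^ (L + kstar)) ^ (N.choose (nstar - 1 - 1)) :=
            Nat.pow_le_pow_left hcb1 _
        _ = 2 ^ ((L + kstar) * (N.choose (nstar - 1 - 1))) := by rw [← pow_mul]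
        _ ≤ 2 ^ ((L + kstar) * N ^ (nstar - 2)) :=
            Nat.pow_le_pow_right (by norm_num) (Nat.mul_le_mul_left _ hch1)
    · calc cost nstar ^ (N.choose (nstar - 1))
          = 2 ^ ((kstar + kstar * (nstar * nstar)) * (N.choose (nstar - 1))) := by
            rw [hcv2, ← pow_mul]
        _ ≤ 2 ^ ((kstar + kstar * (nstar * nstar)) * N ^ (nstar - 1)) :=
            Nat.pow_le_pow_right (by norm_num) (Nat.mul_le_mul_left _ hch2)
  have hNeed2X : Need cost nstar N 0 ≤ 2 ^ X := by
    have e1 : N ^ (nstar - 2) * N = N ^ (nstar - 1) := by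
      rw [← pow_succ]; congr 1; omega
    have e2 : N ^ (nstar - 1) * N = N ^ nstar := by
      rw [← pow_succ]; congr 1; omega
    have eYN : N + Y * N = X := by
      calc N + Y * N = N + ((L + kstar) * (N ^ (nstar - 2) * N)
            + (kstar + kstar * (nstar * nstar)) * (N ^ (nstar - 1) * N)) := by
            rw [hY]; ring
        _ = X := by rw [e1, e2, hX]
    calc Need cost nstar N 0 ≤ (2 * PP cost nstar (0 + N)) ^ N :=
          Need_le cost hcostpos nstar N 0
      _ = 2 ^ N * (PP cost nstar N) ^ N := by rw [Nat.zero_add, mul_pow]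
      _ ≤ 2 ^ N * (2 ^ Y) ^ N :=
          Nat.mul_le_mul_left _ (Nat.pow_le_pow_left hPPle N)
      _ = 2 ^ (N + Y * N) := by rw [← pow_mul, ← pow_add]
      _ = 2 ^ X := by rw [eYN]
  -- real arithmetic
  have hmstar2 : 2 ≤ mstar := by omega
  have hM2 : (2 : ℝ) ≤ (mstar : ℝ) := by exact_mod_cast hmstar2
  have hMpos : (0 : ℝ) < (mstar : ℝ) := by linarith
  have hεM : (((1 + L + kstar) * 2 ^ nstar : ℕ) : ℝ) ≤ ε * mstar := by
    have h2 : (Nat.ceil ((((1 + L + kstar) * 2 ^ nstar : ℕ) : ℝ) / ε) : ℝ) ≤ mstar := by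
      have : Nat.ceil ((((1 + L + kstar) * 2 ^ nstar : ℕ) : ℝ) / ε) ≤ mstar := by omega
      exact_mod_cast this
    have h1 := (Nat.le_ceil ((((1 + L + kstar) * 2 ^ nstar : ℕ) : ℝ) / ε)).trans h2
    rw [div_le_iff₀ hε] at h1
    linarith
  have hXle : (X : ℝ) ≤ (1 + ε) * ((kstar * (nstar * nstar + 1) * 2 ^ nstar : ℕ) : ℝ)
      * (mstar : ℝ) ^ nstar := by
    set M := (mstar : ℝ) with hMdef
    have hNM : ((N : ℕ) : ℝ) = M + 2 := by rw [hN]; push_cast; ring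
    have h2M : ((N : ℕ) : ℝ) ≤ 2 * M := by rw [hNM]; linarith
    have hN1 : (1 : ℝ) ≤ ((N : ℕ) : ℝ) := by rw [hNM]; linarith
    have hNnn : (0 : ℝ) ≤ ((N : ℕ) : ℝ) := by linarith
    have b1 : ((N : ℕ) : ℝ) ≤ ((N : ℕ) : ℝ) ^ (nstar - 1) :=
      le_self_pow₀ hN1 (by omega)
    have b2 : ((N : ℕ) : ℝ) ^ (nstar - 1) ≤ 2 ^ nstar * M ^ (nstar - 1) := by
      calc ((N : ℕ) : ℝ) ^ (nstar - 1) ≤ (2 * M) ^ (nstar - 1) :=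
            pow_le_pow_left₀ hNnn h2M _
        _ = 2 ^ (nstar - 1) * M ^ (nstar - 1) := mul_pow _ _ _
        _ ≤ 2 ^ nstar * M ^ (nstar - 1) := by
            have : (2 : ℝ) ^ (nstar - 1) ≤ 2 ^ nstar :=
              pow_le_pow_right₀ (by norm_num) (by omega)
            have hMp : (0 : ℝ) ≤ M ^ (nstar - 1) := by positivity
            nlinarith
    have b3 : ((N : ℕ) : ℝ) ^ nstar ≤ 2 ^ nstar * M ^ nstar := by
      calc ((N : ℕ) : ℝ) ^ nstar ≤ (2 * M) ^ nstar := pow_le_pow_left₀ hNnn h2M _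
        _ = 2 ^ nstar * M ^ nstar := mul_pow _ _ _
    have hMsucc : M ^ (nstar - 1) * M = M ^ nstar := by
      rw [← pow_succ]; congr 1; omega
    have hXcast : (X : ℝ) = ((N : ℕ) : ℝ)
        + (((L : ℕ) : ℝ) + kstar) * ((N : ℕ) : ℝ) ^ (nstar - 1)
        + ((kstar : ℝ) + kstar * (nstar * nstar)) * ((N : ℕ) : ℝ) ^ nstar := by
      rw [hX]; push_cast; ring
    have hc₁cast : ((kstar * (nstar * nstar + 1) * 2 ^ nstar : ℕ) : ℝ)
        = ((kstar : ℝ) + kstar * (nstar * nstar)) * 2 ^ nstar := by push_cast; ring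
    have hεMcast : (1 + ((L : ℕ) : ℝ) + kstar) * 2 ^ nstar ≤ ε * M := by
      calc (1 + ((L : ℕ) : ℝ) + kstar) * 2 ^ nstar
          = (((1 + L + kstar) * 2 ^ nstar : ℕ) : ℝ) := by push_cast; ring
        _ ≤ ε * M := hεM
    have hc₁1 : (1 : ℝ) ≤ ((kstar * (nstar * nstar + 1) * 2 ^ nstar : ℕ) : ℝ) := by
      have : 1 ≤ kstar * (nstar * nstar + 1) * 2 ^ nstar :=
        Nat.one_le_iff_ne_zero.2 (by positivity)
      exact_mod_cast this
    have hMnn : (0 : ℝ) ≤ M ^ nstar := by positivity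
    have hMn1nn : (0 : ℝ) ≤ M ^ (nstar - 1) := by positivity
    have hLnn : (0 : ℝ) ≤ ((L : ℕ) : ℝ) := by positivity
    have hknn : (0 : ℝ) ≤ (kstar : ℝ) := by positivity
    have step1 : (X : ℝ) ≤ (1 + (((L : ℕ) : ℝ) + kstar)) * (2 ^ nstar * M ^ (nstar - 1))
        + ((kstar : ℝ) + kstar * (nstar * nstar)) * (2 ^ nstar * M ^ nstar) := by
      rw [hXcast]
      have hb1 : ((N : ℕ) : ℝ) ≤ 2 ^ nstar * M ^ (nstar - 1) := b1.trans b2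
      have t1 : (((L : ℕ) : ℝ) + kstar) * ((N : ℕ) : ℝ) ^ (nstar - 1)
          ≤ (((L : ℕ) : ℝ) + kstar) * (2 ^ nstar * M ^ (nstar - 1)) :=
        mul_le_mul_of_nonneg_left b2 (by positivity)
      have t2 : ((kstar : ℝ) + kstar * (nstar * nstar)) * ((N : ℕ) : ℝ) ^ nstar
          ≤ ((kstar : ℝ) + kstar * (nstar * nstar)) * (2 ^ nstar * M ^ nstar) :=
        mul_le_mul_of_nonneg_left b3 (by positivity)
      linarith [hb1, t1, t2]
    have step2 : (1 + (((L : ℕ) : ℝ) + kstar)) * (2 ^ nstar * M ^ (nstar - 1))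
        ≤ ε * M ^ nstar := by
      calc (1 + (((L : ℕ) : ℝ) + kstar)) * (2 ^ nstar * M ^ (nstar - 1))
          = ((1 + ((L : ℕ) : ℝ) + kstar) * 2 ^ nstar) * M ^ (nstar - 1) := by ring
        _ ≤ (ε * M) * M ^ (nstar - 1) :=
            mul_le_mul_of_nonneg_right hεMcast hMn1nn
        _ = ε * M ^ nstar := by rw [mul_assoc, mul_comm M (M ^ (nstar - 1)), hMsucc]
    have step3 : ((kstar : ℝ) + kstar * (nstar * nstar)) * (2 ^ nstar * M ^ nstar)
        = ((kstar * (nstar * nstar + 1) * 2 ^ nstar : ℕ) : ℝ) * M ^ nstar := by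
      rw [hc₁cast]; ring
    have hfin : ε * M ^ nstar
          + ((kstar * (nstar * nstar + 1) * 2 ^ nstar : ℕ) : ℝ) * M ^ nstar
        ≤ (1 + ε) * ((kstar * (nstar * nstar + 1) * 2 ^ nstar : ℕ) : ℝ) * M ^ nstar := by
      have hstep : ε * M ^ nstar
          ≤ ε * (((kstar * (nstar * nstar + 1) * 2 ^ nstar : ℕ) : ℝ) * M ^ nstar) :=
        mul_le_mul_of_nonneg_left (le_mul_of_one_le_left hMnn hc₁1) hε.le
      linarith
    calc (X : ℝ) ≤ (1 + (((L : ℕ) : ℝ) + kstar)) * (2 ^ nstar * M ^ (nstar - 1))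
          + ((kstar : ℝ) + kstar * (nstar * nstar)) * (2 ^ nstar * M ^ nstar) := step1
      _ ≤ ε * M ^ nstar
          + ((kstar * (nstar * nstar + 1) * 2 ^ nstar : ℕ) : ℝ) * M ^ nstar := by
            rw [← step3]
            linarith [step2]
      _ ≤ _ := hfin
  have h2Xm : 2 ^ X ≤ m := by
    have hle : ((2 ^ X : ℕ) : ℝ) ≤ (m : ℝ) := by
      rw [Nat.cast_pow, Nat.cast_ofNat]
      calc (2 : ℝ) ^ X = (2 : ℝ) ^ ((X : ℕ) : ℝ) := (Real.rpow_natCast 2 X).symm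
        _ ≤ (2 : ℝ) ^ ((1 + ε) * ((kstar * (nstar * nstar + 1) * 2 ^ nstar : ℕ) : ℝ)
              * (mstar : ℝ) ^ nstar) :=
            Real.rpow_le_rpow_of_exponent_le (by norm_num) hXle
        _ ≤ (m : ℝ) := hm
    exact_mod_cast hle
  have hNeedcard : Need cost nstar N 0 ≤ A.card := by
    have := hNeed2X.trans h2Xm
    omega
  -- apply the greedy construction
  obtain ⟨E, hEA, hEcard, hH⟩ := greedy nstar cost hcostpos
    (colorFn nstar kstar A f h g) A
    (colorFn_bound nstar kstar t hn A f h g R hR hgR) N ∅ A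
    (Finset.empty_subset _) (Finset.Subset.refl _)
    (by simpa using hNeedcard) (by simp)
    (by
      intro s hs hne _
      rw [Finset.subset_empty] at hs
      exact absurd hne (by rw [hs]; exact Finset.not_nonempty_empty))
  have hHE : ∀ s, s ⊆ E → s.Nonempty → s.card ≤ nstar →
      ∀ i ∈ E, ∀ i' ∈ E, (∀ x ∈ s, x < i) → (∀ x ∈ s, x < i') →
        colorFn nstar kstar A f h g s i = colorFn nstar kstar A f h g s i' := by
    intro s hs
    exact hH s (by rw [Finset.empty_union]; exact hs)
  have hEne : E.Nonempty := Finset.card_pos.1 (by omega)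
  set jstar := E.max' hEne with hjdef
  set Astar := E.erase jstar with hAstardef
  have hjE : jstar ∈ E := E.max'_mem hEne
  have hAsubE : Astar ⊆ E := Finset.erase_subset _ _
  have hAstarA : Astar ⊆ A := hAsubE.trans hEA
  have hjA : jstar ∈ A := hEA hjE
  have hAcard : mstar < Astar.card := by
    rw [hAstardef, Finset.card_erase_of_mem hjE, hEcard]; omega
  have hltj : ∀ x ∈ Astar, x < jstar := fun x hx =>
    lt_of_le_of_ne (Finset.le_max' _ _ (Finset.mem_of_mem_erase hx))
      (Finset.ne_of_mem_erase hx)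
  refine ⟨Astar, hAstarA, hAcard, jstar, hjA, hltj, ?_⟩
  intro k hk' u hu v hv
  rw [Finset.mem_powersetCard] at hu hv
  obtain ⟨huA, hucard⟩ := hu
  obtain ⟨hvA, hvcard⟩ := hv
  have huE : u ⊆ E := huA.trans hAsubE
  have habove : ∀ w i, i ∈ above Astar w → (i ∈ Astar ∧ ∀ x ∈ w, x < i) := by
    intro w i hi
    rw [above, Finset.mem_filter] at hi
    exact ⟨hi.1, hi.2⟩
  have hjabv : ∀ x ∈ u, x < jstar := fun x hx => hltj x (huA hx)
  have hune : u.Nonempty := Finset.card_pos.1 (by omega)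
  have hult : u.card ≤ nstar := by omega
  have hjnu : jstar ∉ u := fun hm => lt_irrefl _ (hjabv _ hm)
  refine ⟨?_, ?_, ?_, ?_⟩
  · -- (α)
    rintro ⟨hceq, hone, -⟩ i hiab
    have hvu1 : (v \ u).card = 1 := by
      have h1 := Finset.card_sdiff_add_card_inter u v
      have h2 := Finset.card_sdiff_add_card_inter v u
      rw [Finset.inter_comm] at h2
      omega
    obtain ⟨x, hx⟩ := Finset.card_eq_one.1 hone
    obtain ⟨y, hy⟩ := Finset.card_eq_one.1 hvu1
    have hxm : x ∈ u ∧ x ∉ v := by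
      have : x ∈ u \ v := by rw [hx]; exact Finset.mem_singleton_self x
      exact ⟨(Finset.mem_sdiff.1 this).1, (Finset.mem_sdiff.1 this).2⟩
    have hym : y ∈ v ∧ y ∉ u := by
      have : y ∈ v \ u := by rw [hy]; exact Finset.mem_singleton_self y
      exact ⟨(Finset.mem_sdiff.1 this).1, (Finset.mem_sdiff.1 this).2⟩
    have hscard : (u ∪ v).card = nstar := by
      have h3 := Finset.card_union_add_card_inter u v
      have h1 := Finset.card_sdiff_add_card_inter u v
      omega
    have hsubA : u ∪ v ⊆ Astar := Finset.union_subset huA hvA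
    have hsubE : u ∪ v ⊆ E := hsubA.trans hAsubE
    have hseraseX : (u ∪ v).erase x = v := by
      ext z
      simp only [Finset.mem_erase, Finset.mem_union]
      constructor
      · rintro ⟨hzx, hz | hz⟩
        · by_cases hzv : z ∈ v
          · exact hzv
          · exfalso
            have : z ∈ u \ v := Finset.mem_sdiff.2 ⟨hz, hzv⟩
            rw [hx, Finset.mem_singleton] at this
            exact hzx this
        · exact hz
      · intro hz
        exact ⟨fun he => hxm.2 (he ▸ hz), Or.inr hz⟩
    have hseraseY : (u ∪ v).erase y = u := by
      ext z
      simp only [Finset.mem_erase, Finset.mem_union]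
      constructor
      · rintro ⟨hzy, hz | hz⟩
        · exact hz
        · by_cases hzu : z ∈ u
          · exact hzu
          · exfalso
            have : z ∈ v \ u := Finset.mem_sdiff.2 ⟨hz, hzu⟩
            rw [hy, Finset.mem_singleton] at this
            exact hzy this
      · intro hz
        exact ⟨fun he => hym.2 (he ▸ hz), Or.inl hz⟩
    obtain ⟨p, hp, hgp⟩ := sort_getD_of_mem (u ∪ v) x
      (Finset.mem_union.2 (Or.inl hxm.1))
    obtain ⟨q, hq, hgq⟩ := sort_getD_of_mem (u ∪ v) y
      (Finset.mem_union.2 (Or.inr hym.1))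
    rw [hscard] at hp hq
    obtain ⟨hiA, hiabv⟩ := habove _ _ hiab
    have hiE : i ∈ E := hAsubE hiA
    have hjabv' : ∀ z ∈ u ∪ v, z < jstar := fun z hz => hltj z (hsubA hz)
    have hcc := hHE (u ∪ v) hsubE ⟨x, Finset.mem_union.2 (Or.inl hxm.1)⟩
      (by omega) i hiE jstar hjE hiabv hjabv'
    have hiff := colorFn_alpha hcc hk' hscard hp hq
    rw [hgp, hgq, hseraseX, hseraseY] at hiff
    exact ⟨fun he => (hiff.1 he.symm).symm, fun he => (hiff.2 he.symm).symm⟩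
  · -- (β)
    intro i₀ h0 i₁ h1 h01
    obtain ⟨hi₀A, hi₀u⟩ := habove _ _ h0
    obtain ⟨hi₁A, hi₁u⟩ := habove _ _ h1
    have hi₀nu : i₀ ∉ u := fun hm => lt_irrefl _ (hi₀u _ hm)
    have hsE : insert i₀ u ⊆ E := Finset.insert_subset (hAsubE hi₀A) huE
    have hscard : (insert i₀ u).card = nstar := by
      rw [Finset.card_insert_of_notMem hi₀nu, hucard]; omega
    have habove₁ : ∀ x ∈ insert i₀ u, x < i₁ := by
      intro x hx
      rcases Finset.mem_insert.1 hx with rfl | hx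
      · exact h01
      · exact lt_trans (hi₀u x hx) h01
    have habovej : ∀ x ∈ insert i₀ u, x < jstar := by
      intro x hx
      rcases Finset.mem_insert.1 hx with rfl | hx
      · exact hltj _ hi₀A
      · exact hjabv x hx
    have hcc := hHE (insert i₀ u) hsE ⟨i₀, Finset.mem_insert_self _ _⟩
      (by omega) i₁ (hAsubE hi₁A) jstar hjE habove₁ habovej
    have hiff := colorFn_beta hcc hk' hscard
    have hgetD : ((insert i₀ u).max).getD 0 = i₀ := by
      rw [max_insert_top u i₀ hi₀u]; rfl
    rw [hgetD, Finset.erase_insert hi₀nu] at hiff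
    exact hiff
  · -- (γ)
    intro i hiab
    obtain ⟨hiA, hiu⟩ := habove _ _ hiab
    have hinu : i ∉ u := fun hm => lt_irrefl _ (hiu _ hm)
    have hcc := hHE u huE hune hult i (hAsubE hiA) jstar hjE hiu hjabv
    exact colorFn_gamma hcc hinu hjnu hucard (huA.trans hAstarA)
  · -- (δ)
    have hdel : ∀ i ∈ insert jstar (above Astar u), (i ≤ h k u ↔ jstar ≤ h k u) := by
      intro i hi
      rcases Finset.mem_insert.1 hi with rfl | hi
      · exact Iff.rfl
      · obtain ⟨hiA, hiu⟩ := habove _ _ hi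
        exact colorFn_delta (hHE u huE hune hult i (hAsubE hiA) jstar hjE hiu hjabv)
          hk' hucard
    by_cases hj : jstar ≤ h k u
    · exact Or.inl fun i hi => (hdel i hi).2 hj
    · refine Or.inr fun i hi => ?_
      have := (hdel i hi).1
      omega
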